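/- Let j > 1 be an integer, p an odd prime coprime to 2j, q a power of p, and a the multiplicative order of p modulo 2j. Then for n ≥ 1, the Fibonacci polynomial F_n(T) is a perfect j-th power in F_q[T] if and only if n = p^{ak} for some natural number k. -/

import Mathlib

open Polynomial

noncomputable def fibPoly (R : Type*) [CommRing R] : ℕ → Polynomial R
  | 0 => 0
  | 1 => 1
  | n + 2 => Polynomial.X * fibPoly R (n + 1) + fibPoly R n

noncomputable def lucPoly (R : Type*) [CommRing R] : ℕ → Polynomial R
  | 0 => 2
  | 1 => Polynomial.X
  | n + 2 => Polynomial.X * lucPoly R (n + 1) + lucPoly R n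

section basic
variable (R : Type*) [CommRing R]

@[simp] lemma fibPoly_zero : fibPoly R 0 = 0 := rfl
@[simp] lemma fibPoly_one : fibPoly R 1 = 1 := rfl
lemma fibPoly_add_two (n : ℕ) :
    fibPoly R (n + 2) = X * fibPoly R (n + 1) + fibPoly R n := rfl
@[simp] lemma lucPoly_zero : lucPoly R 0 = 2 := rfl
@[simp] lemma lucPoly_one : lucPoly R 1 = X := rfl
lemma lucPoly_add_two (n : ℕ) :
    lucPoly R (n + 2) = X * lucPoly R (n + 1) + lucPoly R n := rfl
@[simp] lemma fibPoly_two : fibPoly R 2 = X := by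
  rw [show (2:ℕ) = 0 + 2 from rfl, fibPoly_add_two]; simp
@[simp] lemma lucPoly_two : lucPoly R 2 = X ^ 2 + 2 := by
  rw [show (2:ℕ) = 0 + 2 from rfl, lucPoly_add_two]; simp; ring

lemma luc_eq_fib (n : ℕ) : lucPoly R (n + 1) = fibPoly R (n + 2) + fibPoly R n := by
  induction n using Nat.twoStepInduction with
  | zero => simp
  | one =>
    show lucPoly R 2 = fibPoly R 3 + fibPoly R 1
    rw [lucPoly_two, show (3:ℕ) = 1 + 2 from rfl, fibPoly_add_two]; simp; ring
  | more n ih1 ih2 =>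
    rw [lucPoly_add_two, ih1, ih2, fibPoly_add_two R (n+2), fibPoly_add_two R n]
    ring

lemma cassini (n : ℕ) :
    fibPoly R (n + 1) ^ 2 = fibPoly R n * fibPoly R (n + 2) + (-1) ^ n := by
  induction n with
  | zero => simp
  | succ n ih =>
    have h2 := fibPoly_add_two R n
    rw [show n + 1 + 2 = (n + 1) + 2 from rfl, fibPoly_add_two R (n+1)]
    linear_combination (-1) * ih + fibPoly R (n+2) * h2

lemma fib_add (m k : ℕ) : fibPoly R (m + k + 1) =
    fibPoly R (m + 1) * fibPoly R (k + 1) + fibPoly R m * fibPoly R k := by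
  induction k using Nat.twoStepInduction with
  | zero => simp
  | one =>
    show fibPoly R (m + 2) = _
    rw [fibPoly_add_two R m]
    simp
    ring
  | more k ih1 ih2 =>
    have h : m + (k + 2) + 1 = (m + k + 1) + 2 := by ring
    rw [h, fibPoly_add_two R (m + k + 1), show m + k + 1 + 1 = m + (k+1) + 1 by ring,
      ih2, ih1, fibPoly_add_two R (k+1), fibPoly_add_two R k]
    ring

lemma C_mul_fib (n : ℕ) : (X ^ 2 + 4 : Polynomial R) * fibPoly R (n + 1)
    = X * lucPoly R (n + 1) + 2 * lucPoly R n := by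
  cases n with
  | zero => simp; ring
  | succ n =>
    rw [luc_eq_fib, luc_eq_fib, fibPoly_add_two R (n+1), fibPoly_add_two R n]
    ring

lemma luc_sq (n : ℕ) : lucPoly R (n + 1) ^ 2
    = (X ^ 2 + 4) * fibPoly R (n + 1) ^ 2 + 4 * (-1) ^ (n + 1) := by
  rw [luc_eq_fib]
  have h1 := cassini R n
  have h2 := fibPoly_add_two R n
  linear_combination (-4) * h1 + (fibPoly R (n+2) - fibPoly R n + X * fibPoly R (n+1)) * h2

lemma C_mul_deriv (n : ℕ) : (X ^ 2 + 4 : Polynomial R) * derivative (fibPoly R n)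
    = (n : Polynomial R) * lucPoly R n - X * fibPoly R n := by
  induction n using Nat.twoStepInduction with
  | zero => simp
  | one => simp
  | more n ih1 ih2 =>
    have h3 := C_mul_fib R n
    rw [fibPoly_add_two R n, lucPoly_add_two R n, derivative_add, derivative_mul,
      derivative_X, one_mul]
    push_cast at ih2 ⊢
    linear_combination X * ih2 + ih1 + h3
end basic

section frob
variable {F : Type*} [Field F] {p : ℕ} [Fact p.Prime] [CharP F p]

lemma two_ne_zero_of_odd (hp : Odd p) : (2 : F) ≠ 0 := by
  intro h
  have h2 : ((2 : ℕ) : F) = 0 := by exact_mod_cast h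
  rw [CharP.cast_eq_zero_iff F p 2] at h2
  have hp2 : p = 2 := (Nat.prime_dvd_prime_iff_eq Fact.out Nat.prime_two).mp h2
  rw [hp2] at hp
  exact absurd (Nat.odd_iff.mp hp) (by norm_num)

/-- The quadratic extension `F[T][s]/(s² - (T²+4))`. -/
local notation "Rq" => Polynomial F
local notation "Cq" => (X ^ 2 + 4 : Polynomial F)

noncomputable def qpoly (F : Type*) [Field F] : (Polynomial F)[X] :=
  X ^ 2 - Polynomial.C (X ^ 2 + 4 : Polynomial F)

lemma qpoly_monic : (qpoly F).Monic := monic_X_pow_sub_C _ (by norm_num)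

noncomputable abbrev Sq (F : Type*) [Field F] := AdjoinRoot (qpoly F)

lemma lin_inj {a b a' b' : Polynomial F}
    (h : AdjoinRoot.mk (qpoly F) (Polynomial.C a + Polynomial.C b * X)
       = AdjoinRoot.mk (qpoly F) (Polynomial.C a' + Polynomial.C b' * X)) :
    a = a' ∧ b = b' := by
  have hm := qpoly_monic (F := F)
  have hd : (qpoly F).degree = 2 := by
    unfold qpoly
    rw [Polynomial.degree_X_pow_sub_C (by norm_num)]
    rfl
  have key : ∀ u v : Polynomial F,
      (Polynomial.C u + Polynomial.C v * X) %ₘ (qpoly F)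
        = Polynomial.C u + Polynomial.C v * X := by
    intro u v
    rw [Polynomial.modByMonic_eq_self_iff hm, hd]
    apply lt_of_le_of_lt (Polynomial.degree_add_le _ _)
    have h1 : (Polynomial.C u).degree ≤ (1 : WithBot ℕ) :=
      le_trans Polynomial.degree_C_le (by norm_num)
    have h2 : (Polynomial.C v * X).degree ≤ (1 : WithBot ℕ) := by
      apply le_trans (Polynomial.degree_mul_le _ _)
      calc (Polynomial.C v).degree + (X : (Polynomial F)[X]).degree
          ≤ 0 + 1 := add_le_add Polynomial.degree_C_le Polynomial.degree_X_le
        _ = 1 := by norm_num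
    calc max (Polynomial.C u).degree (Polynomial.C v * X).degree
        ≤ 1 := max_le h1 h2
      _ < 2 := by norm_num
  have := congrArg (AdjoinRoot.modByMonicHom hm) h
  rw [AdjoinRoot.modByMonicHom_mk, AdjoinRoot.modByMonicHom_mk, key, key] at this
  constructor
  · have := congrArg (fun f => Polynomial.coeff f 0) this
    simpa using this
  · have := congrArg (fun f => Polynomial.coeff f 1) this
    simpa using this

lemma of_inj : Function.Injective (AdjoinRoot.of (qpoly F)) := by
  intro a b h
  have : AdjoinRoot.mk (qpoly F) (Polynomial.C a + Polynomial.C 0 * X)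
       = AdjoinRoot.mk (qpoly F) (Polynomial.C b + Polynomial.C 0 * X) := by
    simpa [AdjoinRoot.mk_C] using h
  exact (lin_inj this).1

noncomputable instance : CharP (Sq F) p :=
  charP_of_injective_ringHom (of_inj (F := F)) p

lemma s_sq : (AdjoinRoot.root (qpoly F)) ^ 2 = AdjoinRoot.of (qpoly F) Cq := by
  have h : AdjoinRoot.mk (qpoly F) (qpoly F) = 0 := AdjoinRoot.mk_self
  unfold qpoly at h
  rw [map_sub, map_pow, AdjoinRoot.mk_X, AdjoinRoot.mk_C, sub_eq_zero] at h
  exact h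

lemma rep_eq (a b : Polynomial F) :
    AdjoinRoot.of (qpoly F) a + AdjoinRoot.of (qpoly F) b * AdjoinRoot.root (qpoly F)
      = AdjoinRoot.mk (qpoly F) (Polynomial.C a + Polynomial.C b * X) := by
  rw [map_add, map_mul, AdjoinRoot.mk_C, AdjoinRoot.mk_C, AdjoinRoot.mk_X]

lemma formulaA (n : ℕ) : (2 : Sq F) ^ n *
      (AdjoinRoot.of (qpoly F) (fibPoly F n) * AdjoinRoot.root (qpoly F))
    = (AdjoinRoot.of (qpoly F) X + AdjoinRoot.root (qpoly F)) ^ n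
      - (AdjoinRoot.of (qpoly F) X - AdjoinRoot.root (qpoly F)) ^ n := by
  set t := AdjoinRoot.of (qpoly F) X with ht
  set s := AdjoinRoot.root (qpoly F) with hs
  have hs' : s ^ 2 = t ^ 2 + 4 := by
    rw [hs, s_sq, ht, map_add, map_pow, map_ofNat]
  induction n using Nat.twoStepInduction with
  | zero => simp
  | one => simp; ring
  | more n ih1 ih2 =>
    rw [fibPoly_add_two, map_add, map_mul]
    linear_combination (2*t) * ih2 + 4 * ih1 - ((t+s)^n - (t-s)^n) * hs'

lemma formulaB (n : ℕ) : (2 : Sq F) ^ n * AdjoinRoot.of (qpoly F) (lucPoly F n)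
    = (AdjoinRoot.of (qpoly F) X + AdjoinRoot.root (qpoly F)) ^ n
      + (AdjoinRoot.of (qpoly F) X - AdjoinRoot.root (qpoly F)) ^ n := by
  set t := AdjoinRoot.of (qpoly F) X with ht
  set s := AdjoinRoot.root (qpoly F) with hs
  have hs' : s ^ 2 = t ^ 2 + 4 := by
    rw [hs, s_sq, ht, map_add, map_pow, map_ofNat]
  induction n using Nat.twoStepInduction with
  | zero => simp [map_ofNat]; norm_num
  | one => simp; ring
  | more n ih1 ih2 =>
    rw [lucPoly_add_two, map_add, map_mul]
    linear_combination (2*t) * ih2 + 4 * ih1 - ((t+s)^n + (t-s)^n) * hs'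

lemma two_ne_zero_poly (hp : Odd p) : (2 : Polynomial F) ≠ 0 := by
  rw [← map_ofNat (Polynomial.C : F →+* Polynomial F) 2]
  exact Polynomial.C_ne_zero.mpr (two_ne_zero_of_odd hp)

lemma frob_fib (hp : Odd p) : fibPoly F p = Cq ^ ((p - 1) / 2) := by
  obtain ⟨e, he⟩ := hp
  have hediv : (p - 1) / 2 = e := by omega
  rw [hediv]
  set t := AdjoinRoot.of (qpoly F) X with ht
  set s := AdjoinRoot.root (qpoly F) with hs
  have h2S : (2 : Sq F) ^ p = 2 := by
    have h := add_pow_char (1 : Sq F) 1 p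
    norm_num at h
    linear_combination h
  have hsp : s ^ p = AdjoinRoot.of (qpoly F) (Cq ^ e) * s := by
    rw [he, pow_succ, pow_mul, hs, s_sq, map_pow]
  have hγp : (t + s) ^ p = t ^ p + s ^ p := add_pow_char t s p
  have hδp : (t - s) ^ p = t ^ p - s ^ p := sub_pow_char t s
  have e1 := formulaA (F := F) p
  rw [← ht, ← hs, h2S, hγp, hδp, hsp] at e1
  have e2 : AdjoinRoot.of (qpoly F) 0 + AdjoinRoot.of (qpoly F) (2 * fibPoly F p) * s
      = AdjoinRoot.of (qpoly F) 0 + AdjoinRoot.of (qpoly F) (2 * (Cq ^ e)) * s := by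
    simp only [map_zero, zero_add, map_mul, map_pow, map_ofNat]
    simp only [map_pow] at e1
    linear_combination e1
  rw [hs, rep_eq, rep_eq] at e2
  have e3 := (lin_inj e2).2
  exact mul_left_cancel₀ (two_ne_zero_poly ⟨e, he⟩) e3

lemma frob_luc (hp : Odd p) : lucPoly F p = X ^ p := by
  set t := AdjoinRoot.of (qpoly F) X with ht
  set s := AdjoinRoot.root (qpoly F) with hs
  have h2S : (2 : Sq F) ^ p = 2 := by
    have h := add_pow_char (1 : Sq F) 1 p
    norm_num at h
    linear_combination h
  have hγp : (t + s) ^ p = t ^ p + s ^ p := add_pow_char t s p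
  have hδp : (t - s) ^ p = t ^ p - s ^ p := sub_pow_char t s
  have e1 := formulaB (F := F) p
  rw [← ht, ← hs, h2S, hγp, hδp] at e1
  have e2 : AdjoinRoot.of (qpoly F) (2 * lucPoly F p)
      = AdjoinRoot.of (qpoly F) (2 * X ^ p) := by
    simp only [map_mul, map_pow, map_ofNat]
    linear_combination e1
  have e3 := of_inj e2
  exact mul_left_cancel₀ (two_ne_zero_poly hp) e3

end frob

section key
variable {F : Type*} [Field F] {p : ℕ} [Fact p.Prime] [CharP F p]

lemma fib_key (hp : Odd p) (n : ℕ) :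
    fibPoly F (n * p) = fibPoly F n ^ p * fibPoly F p ∧
    fibPoly F (n * p + 1) = fibPoly F (n + 1) ^ p - fibPoly F (p - 1) * fibPoly F n ^ p := by
  obtain ⟨e, he⟩ := hp
  have hp1 : p - 1 = 2 * e := by omega
  have hluc : fibPoly F (2 * e + 2) = X ^ p - fibPoly F (2 * e) := by
    have h1 := luc_eq_fib F (2 * e)
    rw [show 2 * e + 1 = p by omega, frob_luc ⟨e, he⟩] at h1
    linear_combination - h1
  have hcas : fibPoly F (2 * e + 1) ^ 2
      = fibPoly F (2 * e) * fibPoly F (2 * e + 2) + 1 := by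
    have := cassini F (2 * e)
    rwa [show ((-1 : Polynomial F)) ^ (2 * e) = 1 by rw [pow_mul]; norm_num] at this
  rw [hp1]
  induction n with
  | zero =>
    constructor
    · simp [zero_pow (Nat.Prime.ne_zero Fact.out)]
    · simp [zero_pow (Nat.Prime.ne_zero Fact.out)]
  | succ n ih =>
    obtain ⟨ih1, ih2⟩ := ih
    have hadd1 : fibPoly F ((n + 1) * p) =
        fibPoly F (n * p + 1) * fibPoly F (2 * e + 1) + fibPoly F (n * p) * fibPoly F (2 * e) := by
      have := fib_add F (n * p) (2 * e)
      rwa [show n * p + 2 * e + 1 = (n + 1) * p by rw [he]; ring] at this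
    have hadd2 : fibPoly F ((n + 1) * p + 1) =
        fibPoly F (n * p + 1) * fibPoly F (2 * e + 2) + fibPoly F (n * p) * fibPoly F (2 * e + 1) := by
      have := fib_add F (n * p) (2 * e + 1)
      rwa [show n * p + (2 * e + 1) + 1 = (n + 1) * p + 1 by rw [he]; ring] at this
    have hfp : fibPoly F p = fibPoly F (2 * e + 1) := by rw [show 2*e+1 = p by omega]
    constructor
    · rw [hadd1, ih1, ih2, hfp]
      ring
    · rw [hadd2, ih1, ih2, hfp]
      have hfrob : fibPoly F (n + 2) ^ p
          = X ^ p * fibPoly F (n + 1) ^ p + fibPoly F n ^ p := by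
        rw [fibPoly_add_two F n, add_pow_char _ _ p, mul_pow]
      rw [hluc] at hcas
      rw [show n + 1 + 1 = n + 2 from rfl, hfrob, hluc]
      linear_combination (fibPoly F n ^ p) * hcas

lemma fib_mul_pow (hp : Odd p) (m n : ℕ) :
    fibPoly F (n * p ^ m) = fibPoly F n ^ (p ^ m) * fibPoly F (p ^ m) := by
  induction m with
  | zero => simp
  | succ m ih =>
    have h1 : n * p ^ (m + 1) = (n * p ^ m) * p := by ring
    rw [h1, (fib_key hp (n * p ^ m)).1, ih, mul_pow, ← pow_mul, ← pow_succ]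
    have h2 : fibPoly F (p ^ m * p) = fibPoly F (p ^ m) ^ p * fibPoly F p :=
      (fib_key hp (p ^ m)).1
    rw [← pow_succ] at h2
    rw [h2, mul_assoc]

lemma two_mul_E (hp : Odd p) (m : ℕ) : 2 * ((p ^ m - 1) / 2) + 1 = p ^ m := by
  have h1 : Odd (p ^ m) := hp.pow
  have h2 : 1 ≤ p ^ m := Nat.one_le_pow _ _ (Nat.Prime.pos Fact.out)
  obtain ⟨c, hc⟩ := h1
  omega

lemma fib_pp (hp : Odd p) (m : ℕ) :
    fibPoly F (p ^ m) = (X ^ 2 + 4 : Polynomial F) ^ ((p ^ m - 1) / 2) := by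
  induction m with
  | zero => simp
  | succ m ih =>
    have h1 : fibPoly F (p ^ (m + 1)) = fibPoly F (p ^ m) ^ p * fibPoly F p := by
      have := (fib_key (F := F) hp (p ^ m)).1
      rwa [← pow_succ] at this
    have e1 := two_mul_E hp m
    have e2 := two_mul_E hp (m + 1)
    obtain ⟨e, he⟩ := hp
    have h3 : (p - 1) / 2 = e := by omega
    have hexp : (p ^ m - 1) / 2 * p + (p - 1) / 2 = (p ^ (m + 1) - 1) / 2 := by
      rw [h3]
      have h6 : 2 * ((p ^ m - 1) / 2 * p + e) + 1 = (2 * ((p ^ m - 1) / 2) + 1) * p := by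
        rw [he]; ring
      have h7 : (2 * ((p ^ m - 1) / 2) + 1) * p = p ^ (m + 1) := by rw [e1, ← pow_succ]
      have h8 := h6.trans (h7.trans e2.symm)
      generalize hK : (p ^ m - 1) / 2 * p = K at h8 ⊢
      omega
    rw [h1, ih, frob_fib ⟨e, he⟩, ← pow_mul, ← pow_add, hexp]
end key

section deg
variable (F : Type*) [Field F]

lemma fib_monic_deg (n : ℕ) :
    (fibPoly F (n + 1)).Monic ∧ (fibPoly F (n + 1)).degree = n := by
  induction n using Nat.twoStepInduction with
  | zero => exact ⟨monic_one, by simp⟩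
  | one => rw [fibPoly_two]; exact ⟨monic_X, degree_X⟩
  | more n ih1 ih2 =>
    have hm : (X * fibPoly F (n + 2)).Monic := monic_X.mul ih2.1
    have hd : (X * fibPoly F (n + 2)).degree = ((n + 2 : ℕ) : WithBot ℕ) := by
      rw [degree_mul, degree_X, ih2.2]
      push_cast
      ring
    have hlt : (fibPoly F (n + 1)).degree < (X * fibPoly F (n + 2)).degree := by
      rw [hd, ih1.2]
      exact_mod_cast Nat.lt_succ_of_lt (Nat.lt_succ_self n)
    refine ⟨?_, ?_⟩
    · rw [fibPoly_add_two]
      exact hm.add_of_left hlt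
    · rw [fibPoly_add_two, degree_add_eq_left_of_degree_lt hlt, hd]

lemma fib_succ_ne_zero (n : ℕ) : fibPoly F (n + 1) ≠ 0 :=
  (fib_monic_deg F n).1.ne_zero

lemma fib_not_unit (n : ℕ) : ¬ IsUnit (fibPoly F (n + 2)) := by
  intro h
  have hd := (fib_monic_deg F (n + 1)).2
  rw [degree_eq_zero_of_isUnit h] at hd
  exact absurd hd.symm (by exact_mod_cast Nat.succ_ne_zero n)

lemma Cq_deg : (X ^ 2 + 4 : Polynomial F).degree = 2 := by
  have h : (X ^ 2 + 4 : Polynomial F) = X ^ 2 + Polynomial.C 4 := by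
    rw [map_ofNat]
  rw [h, degree_X_pow_add_C (by norm_num)]
  rfl

lemma Cq_ne_zero : (X ^ 2 + 4 : Polynomial F) ≠ 0 := by
  intro h
  have := Cq_deg F
  rw [h, degree_zero] at this
  exact absurd this (by decide)

lemma Cq_not_unit : ¬ IsUnit (X ^ 2 + 4 : Polynomial F) := by
  intro h
  have := Cq_deg F
  rw [degree_eq_zero_of_isUnit h] at this
  exact absurd this (by decide)

lemma fib_mod_Cq (n : ℕ) : (X ^ 2 + 4 : Polynomial F) ∣
    2 ^ n * fibPoly F (n + 1) - ((n : Polynomial F) + 1) * X ^ n := by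
  induction n using Nat.twoStepInduction with
  | zero => simp
  | one =>
    rw [fibPoly_two]
    push_cast
    refine ⟨0, ?_⟩
    ring
  | more n ih1 ih2 =>
    obtain ⟨d2, hd2⟩ := ih2
    obtain ⟨d1, hd1⟩ := ih1
    refine ⟨2 * X * d2 + 4 * d1 + ((n : Polynomial F) + 1) * X ^ n, ?_⟩
    rw [fibPoly_add_two F (n + 1)]
    push_cast at hd2 ⊢
    linear_combination (2 * X) * hd2 + 4 * hd1
end deg

section sqf
variable {F : Type*} [Field F] {p : ℕ} [Fact p.Prime] [CharP F p]

lemma squarefree_of_prime_sq {f : Polynomial F} (hf : f ≠ 0)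
    (h : ∀ r : Polynomial F, Prime r → ¬ r * r ∣ f) : Squarefree f := by
  intro x hx
  by_contra hu
  have hx0 : x ≠ 0 := by
    rintro rfl
    rw [zero_mul] at hx
    exact hf (zero_dvd_iff.mp hx)
  obtain ⟨r, hr, hrx⟩ := WfDvdMonoid.exists_irreducible_factor hu hx0
  exact h r (UniqueFactorizationMonoid.irreducible_iff_prime.mp hr)
    (dvd_trans (mul_dvd_mul hrx hrx) hx)

lemma dvd_derivative_of_sq {r f : Polynomial F} (h : r * r ∣ f) : r ∣ derivative f := by
  obtain ⟨g, rfl⟩ := h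
  have hder : derivative (r * r * g) =
      r * (derivative r * g + derivative r * g + r * derivative g) := by
    simp only [derivative_mul]
    ring
  rw [hder]
  exact Dvd.intro _ rfl

lemma four_unit (hp : Odd p) : IsUnit (4 : Polynomial F) := by
  rw [show (4 : Polynomial F) = Polynomial.C 4 by rw [map_ofNat]]
  refine Polynomial.isUnit_C.mpr (Ne.isUnit ?_)
  have h2 := two_ne_zero_of_odd (F := F) hp
  intro h4
  have h22 : (2 : F) * 2 = 0 := by rw [show (2:F)*2 = 4 by norm_num, h4]
  rcases mul_eq_zero.mp h22 with h | h <;> exact h2 h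

lemma fib_squarefree (hp : Odd p) {n : ℕ} (hn : ¬ p ∣ n) :
    Squarefree (fibPoly F n) := by
  rcases n with _ | m
  · exact absurd (dvd_zero p) hn
  apply squarefree_of_prime_sq (fib_succ_ne_zero F m)
  intro r hr hrr
  have hdvd : r ∣ fibPoly F (m + 1) := dvd_trans ⟨r, rfl⟩ hrr
  have hder : r ∣ derivative (fibPoly F (m + 1)) := dvd_derivative_of_sq hrr
  have h1 : r ∣ ((m + 1 : ℕ) : Polynomial F) * lucPoly F (m + 1) := by
    have hcd := C_mul_deriv F (m + 1)
    have heq : ((m + 1 : ℕ) : Polynomial F) * lucPoly F (m + 1)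
        = (X ^ 2 + 4) * derivative (fibPoly F (m + 1)) + X * fibPoly F (m + 1) := by
      push_cast at hcd ⊢
      linear_combination -hcd
    rw [heq]
    exact dvd_add (hder.mul_left _) (hdvd.mul_left _)
  have hcast : ((m + 1 : ℕ) : F) ≠ 0 := by
    rw [Ne, CharP.cast_eq_zero_iff F p]
    exact hn
  have hunit : IsUnit ((m + 1 : ℕ) : Polynomial F) := by
    rw [← Polynomial.C_eq_natCast]
    exact Polynomial.isUnit_C.mpr hcast.isUnit
  have h2 : r ∣ lucPoly F (m + 1) := (IsUnit.dvd_mul_left hunit).mp h1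
  have h3 : r ∣ (4 : Polynomial F) * (-1) ^ (m + 1) := by
    have hsq := luc_sq F m
    have heq : (4 : Polynomial F) * (-1) ^ (m + 1)
        = lucPoly F (m + 1) ^ 2 - (X ^ 2 + 4) * fibPoly F (m + 1) ^ 2 := by
      linear_combination -hsq
    rw [heq]
    exact dvd_sub (dvd_pow h2 (by norm_num)) ((dvd_pow hdvd (by norm_num)).mul_left _)
  have hu4 : IsUnit ((4 : Polynomial F) * (-1) ^ (m + 1)) :=
    (four_unit hp).mul (isUnit_one.neg.pow _)
  exact hr.not_unit (isUnit_of_dvd_unit h3 hu4)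

lemma fib_coprime_Cq (hp : Odd p) {n : ℕ} (hn2 : 2 ≤ n) (hn : ¬ p ∣ n)
    {r : Polynomial F} (hr : Prime r) (h1 : r ∣ fibPoly F n)
    (h2 : r ∣ (X ^ 2 + 4 : Polynomial F)) : False := by
  obtain ⟨m, rfl⟩ : ∃ m, n = m + 2 := ⟨n - 2, by omega⟩
  have hmod := fib_mod_Cq F (m + 1)
  have h3 : r ∣ (((m + 1 : ℕ) : Polynomial F) + 1) * X ^ (m + 1) := by
    have heq : (((m + 1 : ℕ) : Polynomial F) + 1) * X ^ (m + 1)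
        = 2 ^ (m + 1) * fibPoly F (m + 2)
          - (2 ^ (m + 1) * fibPoly F (m + 2)
            - (((m + 1 : ℕ) : Polynomial F) + 1) * X ^ (m + 1)) := by ring
    rw [heq]
    exact dvd_sub (h1.mul_left _) (h2.trans hmod)
  have hcast : ((m + 2 : ℕ) : F) ≠ 0 := by
    rw [Ne, CharP.cast_eq_zero_iff F p]
    exact hn
  have hunit : IsUnit (((m + 1 : ℕ) : Polynomial F) + 1) := by
    have : (((m + 1 : ℕ) : Polynomial F) + 1) = Polynomial.C ((m + 2 : ℕ) : F) := by
      rw [Polynomial.C_eq_natCast]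
      push_cast
      ring
    rw [this]
    exact Polynomial.isUnit_C.mpr hcast.isUnit
  have h5 : r ∣ X ^ (m + 1) := (IsUnit.dvd_mul_left hunit).mp h3
  have h6 : r ∣ X := hr.dvd_of_dvd_pow h5
  have h7 : r ∣ (4 : Polynomial F) := by
    have heq : (4 : Polynomial F) = (X ^ 2 + 4) - X * X := by ring
    rw [heq]
    exact dvd_sub h2 (h6.mul_right X)
  exact hr.not_unit (isUnit_of_dvd_unit h7 (four_unit hp))

lemma Cq_squarefree (hp : Odd p) : Squarefree (X ^ 2 + 4 : Polynomial F) := by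
  apply squarefree_of_prime_sq (Cq_ne_zero F)
  intro r hr hrr
  have h2 : r ∣ derivative (X ^ 2 + 4 : Polynomial F) := dvd_derivative_of_sq hrr
  have hd : derivative (X ^ 2 + 4 : Polynomial F) = 2 * X := by
    simp
    exact one_add_one_eq_two
  rw [hd] at h2
  have hu2 : IsUnit (2 : Polynomial F) := by
    rw [show (2 : Polynomial F) = Polynomial.C 2 by rw [map_ofNat]]
    exact Polynomial.isUnit_C.mpr (two_ne_zero_of_odd hp).isUnit
  have h6 : r ∣ X := (IsUnit.dvd_mul_left hu2).mp h2
  have h7 : r ∣ (4 : Polynomial F) := by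
    have heq : (4 : Polynomial F) = (X ^ 2 + 4) - X * X := by ring
    rw [heq]
    exact dvd_sub (dvd_trans ⟨r, rfl⟩ hrr) (h6.mul_right X)
  exact hr.not_unit (isUnit_of_dvd_unit h7 (four_unit hp))
end sqf

lemma dvd_iff_pow_eq_one (N : ℕ) [NeZero N] (p m : ℕ) (hp : 1 ≤ p ^ m) :
    N ∣ p ^ m - 1 ↔ (p : ZMod N) ^ m = 1 := by
  constructor
  · intro h
    have h0 : ((p ^ m - 1 : ℕ) : ZMod N) = 0 := (ZMod.natCast_eq_zero_iff _ _).mpr h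
    have h1 : ((p ^ m : ℕ) : ZMod N) = 1 := by
      rw [show p ^ m = (p ^ m - 1) + 1 by omega]
      push_cast
      push_cast at h0
      rw [h0]
      ring
    push_cast at h1
    exact h1
  · intro h
    refine (ZMod.natCast_eq_zero_iff _ _).mp ?_
    rw [Nat.cast_sub hp]
    push_cast
    rw [h]
    ring

open UniqueFactorizationMonoid

theorem fib_poly_jth_power_iff (j p : ℕ) (hj : 1 < j) [Fact p.Prime] (hp : Odd p)
    (hpj : Nat.Coprime p (2 * j)) (F : Type*) [Field F] [Fintype F] [CharP F p]
    (a : ℕ) (ha : a = orderOf (p : ZMod (2 * j))) (n : ℕ) (hn : 1 ≤ n) :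
    (∃ g : Polynomial F, fibPoly F n = g ^ j) ↔ ∃ k : ℕ, n = p ^ (a * k) := by
  classical
  haveI : NeZero (2 * j) := ⟨by omega⟩
  have hppos : 0 < p := Nat.Prime.pos Fact.out
  set m := n.factorization p with hm
  set n' := n / p ^ m with hn'
  have hsplit : p ^ m * n' = n := Nat.ordProj_mul_ordCompl_eq_self n p
  have hpn' : ¬ p ∣ n' := Nat.not_dvd_ordCompl Fact.out (by omega)
  have hn'pos : 0 < n' := Nat.ordCompl_pos p (by omega : n ≠ 0)
  have hfibn : fibPoly F n = fibPoly F n' ^ (p ^ m)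
      * (X ^ 2 + 4 : Polynomial F) ^ ((p ^ m - 1) / 2) := by
    rw [← hsplit, mul_comm (p ^ m) n', fib_mul_pow hp m n', fib_pp hp m]
  constructor
  · rintro ⟨g, hg⟩
    by_cases h1 : n' = 1
    · by_cases hm0 : m = 0
      · exact ⟨0, by rw [← hsplit, h1, hm0]; simp⟩
      · have hE := two_mul_E (p := p) hp m
        have hp3 : 3 ≤ p := by
          rcases Nat.Prime.two_le (Fact.out : p.Prime) |>.lt_or_eq with h | h
          · omega
          · exact absurd hp (by rw [← h]; decide)
        have hple : p ≤ p ^ m := Nat.le_self_pow hm0 p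
        have hEpos : 1 ≤ (p ^ m - 1) / 2 := by omega
        have hCq : (X ^ 2 + 4 : Polynomial F) ^ ((p ^ m - 1) / 2) = g ^ j := by
          rw [← hg, hfibn, h1]
          simp
        have hgne : g ≠ 0 := by
          rintro rfl
          rw [zero_pow (by omega : j ≠ 0)] at hCq
          exact Cq_ne_zero F (pow_eq_zero_iff (by omega : (p ^ m - 1) / 2 ≠ 0) |>.mp hCq)
        obtain ⟨r0, hr0irr, hr0dvd⟩ :=
          WfDvdMonoid.exists_irreducible_factor (Cq_not_unit F) (Cq_ne_zero F)
        obtain ⟨r, hrmem, -⟩ :=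
          exists_mem_normalizedFactors_of_dvd (Cq_ne_zero F) hr0irr hr0dvd
        have hcount : Multiset.count r
            (normalizedFactors ((X ^ 2 + 4 : Polynomial F) ^ ((p ^ m - 1) / 2)))
            = (p ^ m - 1) / 2 := by
          rw [normalizedFactors_pow, Multiset.count_nsmul]
          have hone : Multiset.count r (normalizedFactors (X ^ 2 + 4 : Polynomial F)) = 1 :=
            Multiset.count_eq_one_of_mem
              ((squarefree_iff_nodup_normalizedFactors (Cq_ne_zero F)).mp (Cq_squarefree hp))
              hrmem
          rw [hone, mul_one]
        rw [hCq, normalizedFactors_pow, Multiset.count_nsmul] at hcount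
        have hjE : j ∣ (p ^ m - 1) / 2 := ⟨_, hcount.symm⟩
        obtain ⟨c, hc⟩ := hjE
        have h2j : 2 * j ∣ p ^ m - 1 := by
          refine ⟨c, ?_⟩
          have : p ^ m - 1 = 2 * (j * c) := by omega
          rw [this]; ring
        have hone : (p : ZMod (2 * j)) ^ m = 1 :=
          (dvd_iff_pow_eq_one (2 * j) p m (Nat.one_le_pow _ _ hppos)).mp h2j
        obtain ⟨k, hk⟩ : a ∣ m := ha ▸ orderOf_dvd_of_pow_eq_one hone
        exact ⟨k, by rw [← hsplit, h1, mul_one, hk]⟩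
    · exfalso
      have hn'2 : 2 ≤ n' := by omega
      obtain ⟨m', hm'⟩ : ∃ m', n' = m' + 2 := ⟨n' - 2, by omega⟩
      have hfibne : fibPoly F n' ≠ 0 := by rw [hm']; exact fib_succ_ne_zero F (m' + 1)
      have hfibnu : ¬ IsUnit (fibPoly F n') := by rw [hm']; exact fib_not_unit F m'
      obtain ⟨r0, hr0irr, hr0dvd⟩ := WfDvdMonoid.exists_irreducible_factor hfibnu hfibne
      obtain ⟨r, hrmem, -⟩ := exists_mem_normalizedFactors_of_dvd hfibne hr0irr hr0dvd
      have hrprime : Prime r := prime_of_normalized_factor r hrmem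
      have hrdvd : r ∣ fibPoly F n' := dvd_of_mem_normalizedFactors hrmem
      have hrnotC : ¬ r ∣ (X ^ 2 + 4 : Polynomial F) := fun h =>
        fib_coprime_Cq hp hn'2 hpn' hrprime hrdvd h
      have hgne : g ≠ 0 := by
        rintro rfl
        rw [zero_pow (by omega : j ≠ 0)] at hg
        rw [hg] at hfibn
        exact (mul_ne_zero (pow_ne_zero _ hfibne) (pow_ne_zero _ (Cq_ne_zero F))) hfibn.symm
      have hcount : Multiset.count r (normalizedFactors (fibPoly F n)) = p ^ m := by
        rw [hfibn, normalizedFactors_mul (pow_ne_zero _ hfibne) (pow_ne_zero _ (Cq_ne_zero F)),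
          normalizedFactors_pow, normalizedFactors_pow, Multiset.count_add,
          Multiset.count_nsmul, Multiset.count_nsmul]
        have hone : Multiset.count r (normalizedFactors (fibPoly F n')) = 1 :=
          Multiset.count_eq_one_of_mem
            ((squarefree_iff_nodup_normalizedFactors hfibne).mp (fib_squarefree hp hpn'))
            hrmem
        have hzero : Multiset.count r (normalizedFactors (X ^ 2 + 4 : Polynomial F)) = 0 := by
          rw [Multiset.count_eq_zero]
          intro hmem
          exact hrnotC (dvd_of_mem_normalizedFactors hmem)
        rw [hone, hzero]
        ring
      rw [hg, normalizedFactors_pow, Multiset.count_nsmul] at hcount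
      have hjdvd : j ∣ p ^ m := ⟨_, hcount.symm⟩
      have hco : Nat.Coprime j (p ^ m) :=
        Nat.Coprime.pow_right _ ((hpj.coprime_dvd_right (Dvd.intro_left 2 rfl)).symm)
      exact absurd (hco.eq_one_of_dvd hjdvd) (by omega)
  · rintro ⟨k, hk⟩
    have hone : (p : ZMod (2 * j)) ^ (a * k) = 1 := by
      rw [pow_mul, ha, pow_orderOf_eq_one, one_pow]
    have h2j : 2 * j ∣ p ^ (a * k) - 1 :=
      (dvd_iff_pow_eq_one (2 * j) p (a * k) (Nat.one_le_pow _ _ hppos)).mpr hone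
    have hE := two_mul_E (p := p) hp (a * k)
    obtain ⟨c, hc⟩ := h2j
    have hjE : j ∣ (p ^ (a * k) - 1) / 2 := by
      refine ⟨c, ?_⟩
      have h2 : p ^ (a * k) - 1 = 2 * (j * c) := by rw [hc]; ring
      generalize hw : j * c = w at h2 ⊢
      omega
    obtain ⟨c', hc'⟩ := hjE
    refine ⟨(X ^ 2 + 4 : Polynomial F) ^ c', ?_⟩
    rw [hk, fib_pp hp (a * k), hc', ← pow_mul, mul_comm c' j]
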